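/- If u(t,x) = a·exp(i(kx+ωt)) with real constants a ≠ 0, k, ω and v = u - u_xx, then u satisfies the NLS-type peakon equation i·v_t + i(Im(ū u_x)v)_x + (1/2)(|u|²-|u_x|²)v = 0 if and only if ω = (1/2)a²(1-3k²). -/

import Mathlib

open Complex

noncomputable section

/-- Partial t-derivative of a curried complex-valued function of (t,x). -/
def pdt (f : ℝ → ℝ → ℂ) (t x : ℝ) : ℂ := deriv (fun s => f s x) t

/-- Partial x-derivative of a curried complex-valued function of (t,x). -/
def pdx (f : ℝ → ℝ → ℂ) (t x : ℝ) : ℂ := deriv (fun y => f t y) x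

/-- The NLS-type peakon equation
`i·v_t + i(Im(ū u_x)v)_x + (1/2)(|u|²-|u_x|²)v = 0` holds at all (t,x). -/
def NLSPeakonEq (u v : ℝ → ℝ → ℂ) : Prop :=
  ∀ t x : ℝ,
    Complex.I * pdt v t x
      + Complex.I * pdx (fun t x =>
          (((((starRingEnd ℂ) (u t x)) * pdx u t x).im : ℝ) : ℂ) * v t x) t x
      + (1/2) * ((Complex.normSq (u t x) - Complex.normSq (pdx u t x) : ℝ) : ℂ) * v t x = 0

lemma planewave_hasDerivAt (a : ℝ) (b c : ℂ) (x : ℝ) :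
    HasDerivAt (fun y : ℝ => (a:ℂ) * Complex.exp (Complex.I * (b * y + c)))
      ((a:ℂ) * (Complex.I * b) * Complex.exp (Complex.I * (b * x + c))) x := by
  have h1 : HasDerivAt (fun y : ℝ => (y:ℂ)) 1 x := by
    simpa using (hasDerivAt_id x).ofReal_comp
  have h2 : HasDerivAt (fun y : ℝ => Complex.I * (b * y + c)) (Complex.I * b) x := by
    have := ((h1.const_mul b).add_const c).const_mul Complex.I
    simpa [mul_comm, mul_assoc] using this
  have := h2.cexp.const_mul (a:ℂ)
  simpa [mul_comm, mul_assoc, mul_left_comm] using this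

theorem nls_planewave_dispersion (a k ω : ℝ) (ha : a ≠ 0)
    (u v : ℝ → ℝ → ℂ)
    (hu : ∀ t x : ℝ, u t x = (a : ℂ) * Complex.exp (Complex.I * ((k : ℂ) * x + (ω : ℂ) * t)))
    (hv : ∀ t x : ℝ, v t x = u t x - pdx (pdx u) t x) :
    NLSPeakonEq u v ↔ ω = (1/2) * a^2 * (1 - 3 * k^2) := by
  -- x-derivative of u
  have hux : ∀ t x : ℝ, pdx u t x = Complex.I * k * u t x := by
    intro t x
    have h := planewave_hasDerivAt a (k:ℂ) ((ω:ℂ)*t) x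
    have : pdx u t x = (a:ℂ) * (Complex.I * k) * Complex.exp (Complex.I * ((k:ℂ) * x + (ω:ℂ) * t)) := by
      unfold pdx
      rw [show (fun y : ℝ => u t y) = fun y : ℝ => (a:ℂ) * Complex.exp (Complex.I * ((k:ℂ) * y + (ω:ℂ)*t)) from funext fun y => hu t y]
      exact h.deriv
    rw [this, hu t x]; ring
  -- second x-derivative
  have huxx : ∀ t x : ℝ, pdx (pdx u) t x = -(k:ℂ)^2 * u t x := by
    intro t x
    have : pdx (pdx u) t x = deriv (fun y => Complex.I * k * u t y) x := by
      unfold pdx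
      congr 1
      exact funext fun y => hux t y
    rw [this]
    have hd : ∀ y : ℝ, HasDerivAt (fun y : ℝ => u t y)
        ((a:ℂ) * (Complex.I * k) * Complex.exp (Complex.I * ((k:ℂ) * y + (ω:ℂ) * t))) y := by
      intro y
      have h := planewave_hasDerivAt a (k:ℂ) ((ω:ℂ)*t) y
      rw [show (fun y : ℝ => u t y) = fun y : ℝ => (a:ℂ) * Complex.exp (Complex.I * ((k:ℂ) * y + (ω:ℂ)*t)) from funext fun y => hu t y]
      exact h
    have := ((hd x).const_mul (Complex.I * k)).deriv
    rw [this, hu t x]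
    have hI : Complex.I * Complex.I = -1 := Complex.I_mul_I
    ring_nf
    rw [show Complex.I^2 = -1 from Complex.I_sq]
    ring
  -- v = (1+k²) u
  have hvu : ∀ t x : ℝ, v t x = (1 + (k:ℂ)^2) * u t x := by
    intro t x; rw [hv t x, huxx t x]; ring
  -- t-derivative of u
  have hut : ∀ t x : ℝ, HasDerivAt (fun s : ℝ => u s x) (Complex.I * ω * u t x) t := by
    intro t x
    have h := planewave_hasDerivAt a (ω:ℂ) ((k:ℂ)*x) t
    have heq : (fun s : ℝ => u s x) = fun s : ℝ => (a:ℂ) * Complex.exp (Complex.I * ((ω:ℂ) * s + (k:ℂ)*x)) := by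
      funext s; rw [hu s x]; ring_nf
    rw [heq, hu t x]
    have : Complex.I * ((k:ℂ) * x + (ω:ℂ) * t) = Complex.I * ((ω:ℂ) * t + (k:ℂ) * x) := by ring
    rw [this]
    convert h using 1
    ring
  -- t-derivative of v
  have hvt : ∀ t x : ℝ, pdt v t x = (1 + (k:ℂ)^2) * (Complex.I * ω) * u t x := by
    intro t x
    unfold pdt
    rw [show (fun s : ℝ => v s x) = fun s : ℝ => (1 + (k:ℂ)^2) * u s x from funext fun s => hvu s x]
    rw [((hut t x).const_mul ((1 + (k:ℂ)^2))).deriv]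
    ring
  -- normSq u = a²
  have hns : ∀ t x : ℝ, Complex.normSq (u t x) = a^2 := by
    intro t x
    rw [hu t x]
    have : Complex.I * ((k:ℂ) * x + (ω:ℂ) * t) = ((k*x + ω*t : ℝ):ℂ) * Complex.I := by
      push_cast; ring
    rw [this, map_mul, Complex.normSq_ofReal]
    have habs : ‖Complex.exp (((k*x + ω*t : ℝ):ℂ) * Complex.I)‖ = 1 :=
      Complex.norm_exp_ofReal_mul_I _
    have : Complex.normSq (Complex.exp (((k*x + ω*t : ℝ):ℂ) * Complex.I)) = 1 := by
      rw [← Complex.sq_norm, habs]; norm_num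
    rw [this]; ring
  -- Im(ū u_x) = k a²
  have hIm : ∀ t x : ℝ, ((starRingEnd ℂ) (u t x) * pdx u t x).im = k * a^2 := by
    intro t x
    rw [hux t x]
    have h2 : (starRingEnd ℂ) (u t x) * u t x = ((Complex.normSq (u t x) : ℝ) : ℂ) := by
      rw [mul_comm]; exact Complex.mul_conj _
    rw [hns t x] at h2
    have h3 : (starRingEnd ℂ) (u t x) * (Complex.I * k * u t x)
        = ((k * a^2 : ℝ) : ℂ) * Complex.I := by
      have : ((k * a^2 : ℝ) : ℂ) * Complex.I = Complex.I * (k:ℂ) * ((a^2 : ℝ) : ℂ) := by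
        push_cast; ring
      rw [this]
      linear_combination (Complex.I * (k:ℂ)) * h2
    rw [h3]
    simp only [Complex.mul_im, Complex.ofReal_re, Complex.ofReal_im, Complex.I_re, Complex.I_im, mul_one, mul_zero, zero_mul, add_zero, zero_add]
  -- the middle function
  have hmid : ∀ t x : ℝ, pdx (fun t x =>
          (((((starRingEnd ℂ) (u t x)) * pdx u t x).im : ℝ) : ℂ) * v t x) t x
        = ((k * a^2 : ℝ):ℂ) * (1 + (k:ℂ)^2) * (Complex.I * k) * u t x := by
    intro t x
    have heq : (fun y : ℝ => (((((starRingEnd ℂ) (u t y)) * pdx u t y).im : ℝ) : ℂ) * v t y)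
        = fun y : ℝ => ((k * a^2 : ℝ):ℂ) * (1 + (k:ℂ)^2) * ((a:ℂ) * Complex.exp (Complex.I * ((k:ℂ) * y + (ω:ℂ)*t))) := by
      funext y
      rw [hIm t y, hvu t y, hu t y]
      ring
    show deriv (fun y : ℝ => (((((starRingEnd ℂ) (u t y)) * pdx u t y).im : ℝ) : ℂ) * v t y) x = _
    rw [heq]
    have hd := (planewave_hasDerivAt a (k:ℂ) ((ω:ℂ)*t) x).const_mul (((k * a^2 : ℝ):ℂ) * (1 + (k:ℂ)^2))
    rw [hd.deriv, hu t x]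
    ring
  -- normSq u_x = k² a²
  have hnsx : ∀ t x : ℝ, Complex.normSq (pdx u t x) = k^2 * a^2 := by
    intro t x
    rw [hux t x]
    simp only [map_mul, hns t x, Complex.normSq_ofReal, Complex.normSq_I]
    ring
  -- the LHS equals c * u where c is a real scalar
  have hLHS : ∀ t x : ℝ,
      Complex.I * pdt v t x
      + Complex.I * pdx (fun t x =>
          (((((starRingEnd ℂ) (u t x)) * pdx u t x).im : ℝ) : ℂ) * v t x) t x
      + (1/2) * ((Complex.normSq (u t x) - Complex.normSq (pdx u t x) : ℝ) : ℂ) * v t x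
      = (((1 + k^2) * (-ω - k^2*a^2 + (a^2 - k^2*a^2)/2) : ℝ) : ℂ) * u t x := by
    intro t x
    rw [hvt t x, hmid t x, hns t x, hnsx t x, hvu t x]
    have hI : Complex.I^2 = -1 := Complex.I_sq
    push_cast
    ring_nf
    rw [show Complex.I^2 = -1 from Complex.I_sq]
    ring
  have huz : ∀ t x : ℝ, u t x ≠ 0 := by
    intro t x
    rw [hu t x]
    exact mul_ne_zero (Complex.ofReal_ne_zero.mpr ha) (Complex.exp_ne_zero _)
  constructor
  · intro h
    have h0 := h 0 0
    rw [hLHS 0 0] at h0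
    have hc : (((1 + k^2) * (-ω - k^2*a^2 + (a^2 - k^2*a^2)/2) : ℝ) : ℂ) = 0 :=
      (mul_eq_zero.mp h0).resolve_right (huz 0 0)
    have hcr : (1 + k^2) * (-ω - k^2*a^2 + (a^2 - k^2*a^2)/2) = 0 := by
      exact_mod_cast hc
    have hpos : (1 + k^2) ≠ 0 := by positivity
    have := (mul_eq_zero.mp hcr).resolve_left hpos
    linarith
  · intro h
    intro t x
    rw [hLHS t x]
    have : (1 + k^2) * (-ω - k^2*a^2 + (a^2 - k^2*a^2)/2) = 0 := by
      rw [h]; ring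
    rw [this]
    simp
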